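/- The projection of the n-th generation four-corner Cantor set K_n onto the line at angle α = arctan(1/2) tiles a fixed interval: proj_α(K_n) = [0, 3/√5] for every n ∈ ℕ; moreover, for each square Q_{a,b} of K_n the projection proj_α(Q_{a,b}) is a 4-adic subinterval of [0, 3/√5] of the form [(3/√5)·m·4^{-n}, (3/√5)·(m+1)·4^{-n}] for some integer 0 ≤ m < 4^n, and distinct squares project onto intervals with disjoint interiors. -/

import Mathlib

open MeasureTheory Real Set

noncomputable section

/-- Digit value: `false ↦ 0`, `true ↦ 3`. -/
def dig (b : Bool) : ℝ := if b then 3 else 0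

/-- Left endpoint `x_a = ∑ a_j 4^{-j}` of the interval coded by the word `a ∈ {0,3}^n`. -/
def cantorX {n : ℕ} (a : Fin n → Bool) : ℝ :=
  ∑ j : Fin n, dig (a j) * (4 : ℝ) ^ (-((j : ℕ) + 1) : ℤ)

/-- The `n`-th generation `C_n` of the middle-half Cantor set. -/
def cantorC (n : ℕ) : Set ℝ :=
  ⋃ a : Fin n → Bool, Icc (cantorX a) (cantorX a + (4 : ℝ) ^ (-(n : ℤ)))

/-- The `n`-th generation `K_n = C_n × C_n` of the four-corner Cantor set. -/
def cantorK (n : ℕ) : Set (ℝ × ℝ) := cantorC n ×ˢ cantorC n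

/-- The square `Q_{a,b}` of side `4^{-n}` of the `n`-th generation. -/
def cantorSq {n : ℕ} (a b : Fin n → Bool) : Set (ℝ × ℝ) :=
  Icc (cantorX a) (cantorX a + (4 : ℝ) ^ (-(n : ℤ))) ×ˢ
    Icc (cantorX b) (cantorX b + (4 : ℝ) ^ (-(n : ℤ)))

/-- Orthogonal projection in direction `θ`: `proj_θ (x, y) = x cos θ + y sin θ`. -/
def projAngle (θ : ℝ) (p : ℝ × ℝ) : ℝ := p.1 * Real.cos θ + p.2 * Real.sin θ

/-- The Favard length of a planar set. -/
def favard (E : Set (ℝ × ℝ)) : ℝ :=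
  (1 / π) * ∫ θ in (0 : ℝ)..π, (volume (projAngle θ '' E)).toReal

end

namespace ProjTiles

lemma s5_pos : (0:ℝ) < Real.sqrt 5 := Real.sqrt_pos.2 (by norm_num)

lemma s5_ne : Real.sqrt 5 ≠ 0 := ne_of_gt s5_pos

lemma sqrt_of : Real.sqrt (1 + (1/2:ℝ)^2) = Real.sqrt 5 * (1/2) := by
  rw [show (1 + (1/2:ℝ)^2) = 5 * (1/2)^2 by norm_num,
    Real.sqrt_mul (by norm_num : (0:ℝ) ≤ 5), Real.sqrt_sq (by norm_num : (0:ℝ) ≤ 1/2)]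

lemma cos_alpha : Real.cos (Real.arctan (1 / 2)) = 2 / Real.sqrt 5 := by
  rw [Real.cos_arctan, sqrt_of]
  field_simp

lemma sin_alpha : Real.sin (Real.arctan (1 / 2)) = 1 / Real.sqrt 5 := by
  rw [Real.sin_arctan, sqrt_of]
  field_simp

lemma image_proj_Icc (c s p q L : ℝ) (hc : 0 < c) (hs : 0 < s) (hL : 0 ≤ L) :
    (fun pt : ℝ × ℝ => pt.1 * c + pt.2 * s) '' (Icc p (p + L) ×ˢ Icc q (q + L)) =
      Icc (p * c + q * s) (p * c + q * s + (c + s) * L) := by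
  ext t
  constructor
  · rintro ⟨⟨x, y⟩, ⟨⟨hx1, hx2⟩, ⟨hy1, hy2⟩⟩, rfl⟩
    dsimp only
    constructor <;> nlinarith
  · rintro ⟨h1, h2⟩
    have hcs : 0 < c + s := by linarith
    set u : ℝ := (t - (p * c + q * s)) / (c + s) with hu
    have hu0 : 0 ≤ u := div_nonneg (by linarith) (le_of_lt hcs)
    have huL : u ≤ L := by
      rw [hu, div_le_iff₀ hcs]
      nlinarith
    refine ⟨(p + u, q + u), ⟨⟨le_add_of_nonneg_right hu0, (add_le_add_iff_left p).2 huL⟩,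
      ⟨le_add_of_nonneg_right hu0, (add_le_add_iff_left q).2 huL⟩⟩, ?_⟩
    have hmc : u * (c + s) = t - (p * c + q * s) := div_mul_cancel₀ _ (ne_of_gt hcs)
    show (p + u) * c + (q + u) * s = t
    linear_combination hmc

def bitv (x : Bool) : ℕ := cond x 1 0

def dpair (x y : Bool) : Fin 4 := ⟨2 * bitv x + bitv y, by cases x <;> cases y <;> simp [bitv]⟩

def code {n : ℕ} (p : (Fin n → Bool) × (Fin n → Bool)) : Fin (4 ^ n) :=
  finFunctionFinEquiv (fun i => dpair (p.1 i.rev) (p.2 i.rev))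

lemma dpair_inj : ∀ x y x' y' : Bool, dpair x y = dpair x' y' → x = x' ∧ y = y' := by decide

lemma code_injective {n : ℕ} : Function.Injective (code (n := n)) := by
  rintro ⟨a, b⟩ ⟨a', b'⟩ h
  have h2 := finFunctionFinEquiv.injective h
  have key : ∀ j : Fin n, dpair (a j) (b j) = dpair (a' j) (b' j) := by
    intro j
    have := congrFun h2 j.rev
    simpa [Fin.rev_rev] using this
  simp only [Prod.mk.injEq]
  exact ⟨funext fun j => (dpair_inj _ _ _ _ (key j)).1,
    funext fun j => (dpair_inj _ _ _ _ (key j)).2⟩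

lemma code_surjective {n : ℕ} : Function.Surjective (code (n := n)) := by
  intro m
  set f := finFunctionFinEquiv.symm m with hf
  refine ⟨(fun j => decide (2 ≤ (f j.rev : ℕ)), fun j => decide ((f j.rev : ℕ) % 2 = 1)), ?_⟩
  unfold code
  rw [← Equiv.apply_symm_apply finFunctionFinEquiv m, ← hf]
  congr 1
  funext i
  simp only [Fin.rev_rev]
  have hlt : (f i : ℕ) < 4 := (f i).isLt
  apply Fin.ext
  by_cases h1 : 2 ≤ (f i : ℕ) <;> by_cases h2 : (f i : ℕ) % 2 = 1 <;>
    simp [dpair, bitv, h1, h2] <;> omega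

lemma two_xa_xb {n : ℕ} (a b : Fin n → Bool) :
    2 * cantorX a + cantorX b = 3 * ((code (a, b) : ℕ) : ℝ) * (4:ℝ) ^ (-(n:ℤ)) := by
  unfold cantorX code
  rw [finFunctionFinEquiv_apply]
  push_cast
  rw [Finset.mul_sum, ← Finset.sum_add_distrib, Finset.mul_sum, Finset.sum_mul]
  refine Fintype.sum_bijective Fin.rev Fin.rev_bijective _ _ ?_
  intro j
  simp only [Fin.rev_rev]
  have hj : (j : ℕ) + 1 ≤ n := j.isLt
  have hrev : (((Fin.rev j : Fin n) : ℕ) : ℤ) = (n : ℤ) - ((j : ℕ) + 1) := by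
    rw [Fin.val_rev]
    push_cast [Nat.cast_sub hj]
    ring
  have hpow : (4:ℝ) ^ ((Fin.rev j : Fin n) : ℕ) * (4:ℝ) ^ (-(n:ℤ)) =
      (4:ℝ) ^ (-((j : ℕ) + 1) : ℤ) := by
    rw [← zpow_natCast (4:ℝ) ((Fin.rev j : Fin n) : ℕ),
      ← zpow_add₀ (by norm_num : (4:ℝ) ≠ 0), hrev]
    congr 1
    ring
  calc 2 * (dig (a j) * (4:ℝ) ^ (-((j : ℕ) + 1) : ℤ)) + dig (b j) * (4:ℝ) ^ (-((j : ℕ) + 1) : ℤ)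
      = (2 * dig (a j) + dig (b j)) * (4:ℝ) ^ (-((j : ℕ) + 1) : ℤ) := by ring
    _ = 3 * ((dpair (a j) (b j) : ℕ) : ℝ) * ((4:ℝ) ^ ((Fin.rev j : Fin n) : ℕ) * (4:ℝ) ^ (-(n:ℤ))) := by
        have hd : ((dpair (a j) (b j) : Fin 4) : ℕ) = 2 * bitv (a j) + bitv (b j) := rfl
        rw [hpow, hd]
        cases a j <;> cases b j <;>
          simp only [dig, bitv, cond_true, cond_false, if_true, if_false] <;>
          push_cast <;> ring
    _ = 3 * (((dpair (a j) (b j) : ℕ) : ℝ) * (4:ℝ) ^ ((Fin.rev j : Fin n) : ℕ)) * (4:ℝ) ^ (-(n:ℤ)) := by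
        ring

lemma sq_proj {n : ℕ} (a b : Fin n → Bool) :
    projAngle (Real.arctan (1 / 2)) '' cantorSq a b =
      Icc (3 / Real.sqrt 5 * ((code (a, b) : ℕ) : ℝ) * (4 : ℝ) ^ (-(n : ℤ)))
        (3 / Real.sqrt 5 * (((code (a, b) : ℕ) : ℝ) + 1) * (4 : ℝ) ^ (-(n : ℤ))) := by
  have hL : (0:ℝ) ≤ (4:ℝ) ^ (-(n:ℤ)) := le_of_lt (zpow_pos (by norm_num) _)
  have hc : (0:ℝ) < 2 / Real.sqrt 5 := by positivity
  have hs : (0:ℝ) < 1 / Real.sqrt 5 := by positivity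
  have himg : projAngle (Real.arctan (1 / 2)) '' cantorSq a b =
      (fun pt : ℝ × ℝ => pt.1 * (2 / Real.sqrt 5) + pt.2 * (1 / Real.sqrt 5)) ''
        (Icc (cantorX a) (cantorX a + (4:ℝ) ^ (-(n:ℤ))) ×ˢ
          Icc (cantorX b) (cantorX b + (4:ℝ) ^ (-(n:ℤ)))) := by
    unfold projAngle cantorSq
    rw [cos_alpha, sin_alpha]
  rw [himg, image_proj_Icc _ _ _ _ _ hc hs hL]
  have key := two_xa_xb a b
  have e1 : cantorX a * (2 / Real.sqrt 5) + cantorX b * (1 / Real.sqrt 5)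
      = 3 / Real.sqrt 5 * ((code (a, b) : ℕ) : ℝ) * (4:ℝ) ^ (-(n:ℤ)) := by
    linear_combination (Real.sqrt 5)⁻¹ * key
  rw [e1]
  have e2 : 3 / Real.sqrt 5 * ((code (a, b) : ℕ) : ℝ) * (4:ℝ) ^ (-(n:ℤ))
        + (2 / Real.sqrt 5 + 1 / Real.sqrt 5) * (4:ℝ) ^ (-(n:ℤ))
      = 3 / Real.sqrt 5 * (((code (a, b) : ℕ) : ℝ) + 1) * (4:ℝ) ^ (-(n:ℤ)) := by
    ring
  rw [e2]

lemma iUnion_Fin_Icc (r : ℝ) (hr : 0 ≤ r) (N : ℕ) (hN : 0 < N) :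
    ⋃ m : Fin N, Icc (r * ((m : ℕ) : ℝ)) (r * (((m : ℕ) : ℝ) + 1)) = Icc 0 (r * (N : ℝ)) := by
  ext t
  simp only [mem_iUnion, mem_Icc]
  constructor
  · rintro ⟨m, h1, h2⟩
    have hm : ((m : ℕ) : ℝ) + 1 ≤ (N : ℝ) := by exact_mod_cast m.isLt
    have hm0 : (0:ℝ) ≤ ((m : ℕ) : ℝ) := Nat.cast_nonneg _
    constructor
    · nlinarith
    · nlinarith
  · rintro ⟨h0, hN'⟩
    rcases eq_or_lt_of_le hr with hr0 | hr0
    · subst hr0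
      refine ⟨⟨0, hN⟩, ?_, ?_⟩ <;> simp <;> linarith
    · by_cases hc : Nat.floor (t / r) < N
      · refine ⟨⟨Nat.floor (t / r), hc⟩, ?_, ?_⟩
        · have h := Nat.floor_le (div_nonneg h0 (le_of_lt hr0))
          calc r * ((⌊t / r⌋₊ : ℕ) : ℝ) ≤ r * (t / r) := by
                exact mul_le_mul_of_nonneg_left h hr
            _ = t := by field_simp
        · have h := Nat.lt_floor_add_one (t / r)
          have := mul_lt_mul_of_pos_left h hr0
          calc t = r * (t / r) := by field_simp
            _ ≤ r * (((⌊t / r⌋₊ : ℕ) : ℝ) + 1) := le_of_lt (by exact this)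
      · push_neg at hc
        have hfl : ((N : ℕ) : ℝ) ≤ t / r := le_trans (by exact_mod_cast hc)
          (Nat.floor_le (div_nonneg h0 (le_of_lt hr0)))
        have hrN : r * (N : ℝ) ≤ t := by
          rw [mul_comm]
          exact (le_div_iff₀ hr0).1 hfl
        have ht : t = r * (N : ℝ) := le_antisymm hN' hrN
        refine ⟨⟨N - 1, by omega⟩, ?_, ?_⟩ <;>
          · simp only [ht]
            have hcast : (((N - 1 : ℕ)) : ℝ) = (N : ℝ) - 1 := by
              push_cast [Nat.cast_sub hN]
              ring
            rw [hcast]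
            nlinarith

lemma cantorK_eq_iUnion (n : ℕ) :
    cantorK n = ⋃ p : (Fin n → Bool) × (Fin n → Bool), cantorSq p.1 p.2 := by
  ext ⟨x, y⟩
  simp only [cantorK, cantorC, cantorSq, mem_prod, mem_iUnion, mem_Icc, Prod.exists]
  constructor
  · rintro ⟨⟨a, ha⟩, ⟨b, hb⟩⟩
    exact ⟨a, b, ha, hb⟩
  · rintro ⟨a, b, ha, hb⟩
    exact ⟨⟨a, ha⟩, ⟨b, hb⟩⟩

lemma proj_cantorK (n : ℕ) :
    projAngle (Real.arctan (1 / 2)) '' cantorK n = Icc 0 (3 / Real.sqrt 5) := by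
  rw [cantorK_eq_iUnion, image_iUnion]
  have hre : ∀ p : (Fin n → Bool) × (Fin n → Bool),
      projAngle (Real.arctan (1 / 2)) '' cantorSq p.1 p.2 =
        (fun m : Fin (4 ^ n) => Icc (3 / Real.sqrt 5 * (4:ℝ) ^ (-(n:ℤ)) * ((m : ℕ) : ℝ))
          (3 / Real.sqrt 5 * (4:ℝ) ^ (-(n:ℤ)) * (((m : ℕ) : ℝ) + 1))) (code p) := by
    rintro ⟨a, b⟩
    rw [sq_proj a b]
    congr 1 <;> ring
  have h1 : (⋃ p : (Fin n → Bool) × (Fin n → Bool),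
      projAngle (Real.arctan (1 / 2)) '' cantorSq p.1 p.2) =
      ⋃ m : Fin (4 ^ n), Icc (3 / Real.sqrt 5 * (4:ℝ) ^ (-(n:ℤ)) * ((m : ℕ) : ℝ))
        (3 / Real.sqrt 5 * (4:ℝ) ^ (-(n:ℤ)) * (((m : ℕ) : ℝ) + 1)) := by
    rw [iUnion_congr hre]
    exact Function.Surjective.iUnion_comp code_surjective
      (fun m : Fin (4 ^ n) => Icc (3 / Real.sqrt 5 * (4:ℝ) ^ (-(n:ℤ)) * ((m : ℕ) : ℝ))
        (3 / Real.sqrt 5 * (4:ℝ) ^ (-(n:ℤ)) * (((m : ℕ) : ℝ) + 1)))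
  rw [h1, iUnion_Fin_Icc _ (by positivity) _ (by positivity)]
  congr 1
  push_cast
  rw [mul_assoc, ← zpow_natCast (4:ℝ) n, ← zpow_add₀ (by norm_num : (4:ℝ) ≠ 0)]
  simp

lemma disj_proj {n : ℕ} (a b a' b' : Fin n → Bool) (hne : (a, b) ≠ (a', b')) :
    interior (projAngle (Real.arctan (1 / 2)) '' cantorSq a b) ∩
      interior (projAngle (Real.arctan (1 / 2)) '' cantorSq a' b') = ∅ := by
  rw [sq_proj a b, sq_proj a' b', interior_Icc, interior_Icc]
  have hm : (code (a, b) : ℕ) ≠ (code (a', b') : ℕ) := by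
    intro h
    exact hne (code_injective (Fin.ext h))
  have hL : (0:ℝ) < 3 / Real.sqrt 5 * (4:ℝ) ^ (-(n:ℤ)) := by positivity
  ext t
  simp only [mem_inter_iff, mem_Ioo, mem_empty_iff_false, iff_false]
  rintro ⟨⟨ha1, ha2⟩, ⟨hb1, hb2⟩⟩
  have h1 : ((code (a, b) : ℕ) : ℝ) < ((code (a', b') : ℕ) : ℝ) + 1 := by nlinarith
  have h2 : ((code (a', b') : ℕ) : ℝ) < ((code (a, b) : ℕ) : ℝ) + 1 := by nlinarith
  have hn1 : (code (a, b) : ℕ) < (code (a', b') : ℕ) + 1 := by exact_mod_cast h1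
  have hn2 : (code (a', b') : ℕ) < (code (a, b) : ℕ) + 1 := by exact_mod_cast h2
  omega

end ProjTiles

/-- The projection of `K_n` onto the line at angle `α = arctan(1/2)` tiles the interval
`[0, 3/√5]`: `proj_α(K_n) = [0, 3/√5]`; each square `Q_{a,b}` projects onto a 4-adic
subinterval `[(3/√5)·m·4^{-n}, (3/√5)·(m+1)·4^{-n}]` with `0 ≤ m < 4^n`, and distinct
squares project onto intervals with disjoint interiors. -/

theorem projection_cantorK_tiles : ∀ n : ℕ,
    projAngle (Real.arctan (1 / 2)) '' cantorK n = Icc 0 (3 / Real.sqrt 5) ∧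
    (∀ a b : Fin n → Bool, ∃ m : ℕ, m < 4 ^ n ∧
      projAngle (Real.arctan (1 / 2)) '' cantorSq a b =
        Icc (3 / Real.sqrt 5 * m * (4 : ℝ) ^ (-(n : ℤ)))
          (3 / Real.sqrt 5 * (m + 1) * (4 : ℝ) ^ (-(n : ℤ)))) ∧
    (∀ a b a' b' : Fin n → Bool, (a, b) ≠ (a', b') →
      interior (projAngle (Real.arctan (1 / 2)) '' cantorSq a b) ∩
        interior (projAngle (Real.arctan (1 / 2)) '' cantorSq a' b') = ∅) := by
  intro n
  refine ⟨ProjTiles.proj_cantorK n, ?_, ?_⟩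
  · intro a b
    exact ⟨(ProjTiles.code (a, b) : ℕ), (ProjTiles.code (a, b)).isLt, ProjTiles.sq_proj a b⟩
  · intro a b a' b' hne
    exact ProjTiles.disj_proj a b a' b' hne
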